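/- Let G be a group whose abelianization G/[G,G] has exponent dividing p and suppose G is nilpotent of class c. Then the p-central series of G, defined by P₀(G) = G and P_{n+1}(G) = [G, P_n(G)]·P_n(G)ᵖ, coincides with the lower central series: P_n(G) = γ_{n+1}(G) for all n, and in particular G has p-class c. -/

import Mathlib

/-- The `p`-central series: `P 0 = G`, `P (n+1) = [G, P n]·(P n)ᵖ`. -/
def pCentralSeries (p : ℕ) (G : Type*) [Group G] : ℕ → Subgroup G
  | 0 => ⊤
  | n + 1 =>
      ⁅(⊤ : Subgroup G), pCentralSeries p G n⁆ ⊔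
        Subgroup.closure {x : G | ∃ g ∈ pCentralSeries p G n, x = g ^ p}

lemma lcs_succ_eq (G : Type*) [Group G] (n : ℕ) :
    (⊤ : Subgroup G).lowerCentralSeries (n + 1) = ⁅(⊤ : Subgroup G).lowerCentralSeries n, (⊤ : Subgroup G)⁆ := by
  rw [Subgroup.lowerCentralSeries_succ]

lemma pow_mem_lcs_succ (p : ℕ) (G : Type*) [Group G]
    (h : ∀ g : G, g ^ p ∈ commutator G) :
    ∀ n : ℕ, ∀ g ∈ (⊤ : Subgroup G).lowerCentralSeries n, g ^ p ∈ (⊤ : Subgroup G).lowerCentralSeries (n + 1) := by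
  intro n
  induction n with
  | zero => intro g _; exact h g
  | succ n ih =>
    intro g hg
    set N := (⊤ : Subgroup G).lowerCentralSeries (n + 2) with hN
    let π : G →* G ⧸ N := QuotientGroup.mk' N
    have hker : ∀ x : G, x ∈ N → π x = 1 := fun x hx => (QuotientGroup.eq_one_iff x).2 hx
    have hcent : ∀ a ∈ (⊤ : Subgroup G).lowerCentralSeries (n+1), ∀ b : G, Commute (π a) (π b) := by
      intro a ha b
      rw [← commutatorElement_eq_one_iff_commute, ← map_commutatorElement]
      apply hker
      rw [hN, lcs_succ_eq]
      exact Subgroup.commutator_mem_commutator ha (Subgroup.mem_top b)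
    suffices hs : π (g ^ p) = 1 by
      exact (QuotientGroup.eq_one_iff _).mp hs
    rw [map_pow]
    rw [Subgroup.mem_lowerCentralSeries_succ_iff] at hg
    refine Subgroup.closure_induction ?_ ?_ ?_ ?_ hg
    · rintro x ⟨a, ha, b, -, rfl⟩
      set A := π a with hA
      set B := π b with hB
      set C := A * B * A⁻¹ * B⁻¹ with hCdef
      have hx1 : a * b * a⁻¹ * b⁻¹ ∈ (⊤ : Subgroup G).lowerCentralSeries (n+1) := by
        rw [lcs_succ_eq]
        exact Subgroup.commutator_mem_commutator ha (Subgroup.mem_top b)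
      have hC : π (a * b * a⁻¹ * b⁻¹) = C := by simp [hCdef, hA, hB, π]
      have hCA : Commute C A := by
        rw [← hC, hA]; exact hcent _ hx1 a
      have key : ∀ k : ℕ, A ^ k * B * (A ^ k)⁻¹ * B⁻¹ = C ^ k := by
        intro k
        induction k with
        | zero => simp
        | succ k ihk =>
          have hcomm : A * C ^ k = C ^ k * A := ((hCA.pow_left k)).eq.symm
          calc A ^ (k+1) * B * (A ^ (k+1))⁻¹ * B⁻¹
              = (A * (A ^ k * B * (A ^ k)⁻¹ * B⁻¹)) * (B * A⁻¹ * B⁻¹) := by group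
            _ = (A * C ^ k) * (B * A⁻¹ * B⁻¹) := by rw [ihk]
            _ = (C ^ k * A) * (B * A⁻¹ * B⁻¹) := by rw [hcomm]
            _ = C ^ k * C := by rw [hCdef]; group
            _ = C ^ (k+1) := (pow_succ C k).symm
      have hap : a ^ p ∈ (⊤ : Subgroup G).lowerCentralSeries (n+1) := ih a ha
      have hfin : A ^ p * B * (A ^ p)⁻¹ * B⁻¹ = 1 := by
        have := (hcent _ hap b)
        rw [map_pow] at this
        rw [← commutatorElement_eq_one_iff_commute] at this
        rw [commutatorElement_def] at this
        exact this
      rw [commutatorElement_def, hC, ← key p, hfin]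
    · simp
    · intro x y hx hy hpx hpy
      rw [map_mul, (hcent x hx y).mul_pow, hpx, hpy, one_mul]
    · intro x hx hpx
      rw [map_inv, inv_pow, hpx, inv_one]

/-- If `G` has abelianization of exponent dividing `p` and is nilpotent of class
`c`, then the `p`-central series coincides with the lower central series
(`(⊤ : Subgroup G).lowerCentralSeries n` is `γ_{n+1}(G)`), and `G` has `p`-class `c`. -/
theorem stmt_5 (p : ℕ) (G : Type*) [Group G] [Group.IsNilpotent G]
    (h : ∀ g : G, g ^ p ∈ commutator G) (c : ℕ)
    (hc : Group.nilpotencyClass G = c) :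
    (∀ n : ℕ, pCentralSeries p G n = (⊤ : Subgroup G).lowerCentralSeries n) ∧
      pCentralSeries p G c = ⊥ ∧ ∀ m < c, pCentralSeries p G m ≠ ⊥ := by
  have hmain : ∀ n : ℕ, pCentralSeries p G n = (⊤ : Subgroup G).lowerCentralSeries n := by
    intro n
    induction n with
    | zero => rfl
    | succ n ihn =>
      show ⁅(⊤ : Subgroup G), pCentralSeries p G n⁆ ⊔
          Subgroup.closure {x : G | ∃ g ∈ pCentralSeries p G n, x = g ^ p}
        = (⊤ : Subgroup G).lowerCentralSeries (n + 1)
      rw [ihn, Subgroup.commutator_comm, ← lcs_succ_eq]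
      refine sup_eq_left.mpr ?_
      rw [Subgroup.closure_le]
      rintro x ⟨g, hg, rfl⟩
      exact pow_mem_lcs_succ p G h n g hg
  refine ⟨hmain, ?_, ?_⟩
  · rw [hmain, ← hc]; exact lowerCentralSeries_nilpotencyClass
  · intro m hm hbot
    rw [hmain] at hbot
    have := lowerCentralSeries_eq_bot_iff_nilpotencyClass_le.mp hbot
    omega
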